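/- Let λ>0, ρ(x)=λ^{-1}·exp(-x/λ) for x≥0, let p≥2 be an integer with conjugate exponent p*, and let a>1+1/p*. Then for every f∈F_{1,p}(ℝ_+), the function g_{f,ν_a}(t)=f(ν_a(t))ρ(ν_a(t))ν_a'(t), where ν_a(t)=-λ·a·ln(1-t), satisfies g_{f,ν_a}(0)=0, g_{f,ν_a}∈W_{1,p}, and ‖g_{f,ν_a}'‖_{L_p(0,1)} ≤ a^{1+1/p*}·λ^{1/p*}·(1 + (a-1)·((p-1)!)^{1/p}/(p(a-2)+1))·‖f'‖_{L_p(0,∞)}. -/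

import Mathlib

open MeasureTheory Set ENNReal

lemma my_lintegral_cov {s : Set ℝ} {f f' : ℝ → ℝ}
    (hs : MeasurableSet s) (hf' : ∀ x ∈ s, HasDerivWithinAt f (f' x) s x)
    (hf : Set.InjOn f s) (g : ℝ → ℝ≥0∞) :
    ∫⁻ x in f '' s, g x = ∫⁻ x in s, ENNReal.ofReal |f' x| * g (f x) := by
  simpa only [ContinuousLinearMap.det_toSpanSingleton] using
    MeasureTheory.lintegral_image_eq_lintegral_abs_det_fderiv_mul volume hs
      (fun x hx => (hf' x hx).hasFDerivWithinAt) hf g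

lemma my_parts {h u u' : ℝ → ℝ} {t : ℝ} (ht : 0 < t)
    (hh : IntegrableOn h (Ioc 0 t))
    (hu : ∀ s ∈ Icc (0:ℝ) t, HasDerivAt u (u' s) s)
    (hu'c : ContinuousOn u' (Icc 0 t)) :
    ∫ s in Ioc 0 t, (h s * u s + (∫ r in Ioc 0 s, h r) * u' s) =
      (∫ r in Ioc 0 t, h r) * u t := by
  have hu_cont : ContinuousOn u (Icc 0 t) := fun s hs =>
    (hu s hs).continuousAt.continuousWithinAt
  have hhIcc : IntegrableOn h (Icc 0 t) := by
    rwa [integrableOn_Icc_iff_integrableOn_Ioc]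
  have hu'int : IntegrableOn u' (Ioc 0 t) :=
    (hu'c.integrableOn_Icc).mono_set Ioc_subset_Icc_self
  -- integrability of h * u
  have hhu : IntegrableOn (fun s => h s * u s) (Ioc 0 t) :=
    (hhIcc.mul_continuousOn hu_cont isCompact_Icc).mono_set Ioc_subset_Icc_self
  -- continuity of the primitive
  have hHcont : ContinuousOn (fun s => ∫ r in Ioc 0 s, h r) (Icc 0 t) :=
    intervalIntegral.continuousOn_primitive hhIcc
  have hHu' : IntegrableOn (fun s => (∫ r in Ioc 0 s, h r) * u' s) (Ioc 0 t) := by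
    refine ((IntegrableOn.continuousOn_mul_of_subset hHcont (hu'c.integrableOn_Icc)
      isCompact_Icc measurableSet_Icc Subset.rfl).mono_set Ioc_subset_Icc_self)
  set K : ℝ × ℝ → ℝ := fun q => {q' : ℝ × ℝ | q'.2 ≤ q'.1}.indicator
      (fun q' => u' q'.1 * h q'.2) q with hK
  have hmeasK : MeasurableSet {q' : ℝ × ℝ | q'.2 ≤ q'.1} :=
    measurableSet_le measurable_snd measurable_fst
  have hbase : Integrable (fun q : ℝ × ℝ => u' q.1 * h q.2)
      ((volume.restrict (Ioc 0 t)).prod (volume.restrict (Ioc 0 t))) :=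
    Integrable.mul_prod hu'int hh
  have hKint : Integrable K
      ((volume.restrict (Ioc 0 t)).prod (volume.restrict (Ioc 0 t))) :=
    hbase.indicator hmeasK
  have step1 : ∀ s ∈ Ioc (0:ℝ) t,
      ∫ r in Ioc 0 t, K (s, r) = u' s * (∫ r in Ioc 0 s, h r) := by
    intro s hs
    have e1 : (fun r => K (s, r)) = (Iic s).indicator (fun r => u' s * h r) := by
      ext r
      by_cases hr : r ≤ s
      · simp [hK, Set.indicator_apply, hr]
      · simp [hK, Set.indicator_apply, hr]
    rw [e1, setIntegral_indicator measurableSet_Iic]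
    rw [Set.Ioc_inter_Iic, min_eq_right hs.2, integral_const_mul]
  have step2 : ∀ r ∈ Ioc (0:ℝ) t,
      ∫ s in Ioc 0 t, K (s, r) = (u t - u r) * h r := by
    intro r hr
    have e1 : (fun s => K (s, r)) = (Ici r).indicator (fun s => u' s * h r) := by
      ext s
      by_cases hsr : r ≤ s
      · simp [hK, Set.indicator_apply, hsr]
      · simp [hK, Set.indicator_apply, hsr]
    rw [e1, setIntegral_indicator measurableSet_Ici]
    have e2 : Ioc (0:ℝ) t ∩ Ici r = Icc r t := by
      ext x
      simp only [mem_inter_iff, mem_Ioc, mem_Ici, mem_Icc]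
      constructor
      · rintro ⟨⟨_, h2⟩, h3⟩; exact ⟨h3, h2⟩
      · rintro ⟨h1, h2⟩; exact ⟨⟨lt_of_lt_of_le hr.1 h1, h2⟩, h1⟩
    rw [e2, MeasureTheory.integral_mul_const, integral_Icc_eq_integral_Ioc,
      ← intervalIntegral.integral_of_le hr.2]
    have : ∫ s in r..t, u' s = u t - u r := by
      apply intervalIntegral.integral_eq_sub_of_hasDerivAt
      · intro x hx
        rw [uIcc_of_le hr.2] at hx
        exact hu x ⟨le_trans hr.1.le hx.1, hx.2⟩
      · apply ContinuousOn.intervalIntegrable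
        rw [uIcc_of_le hr.2]
        exact hu'c.mono (Icc_subset_Icc hr.1.le le_rfl)
    rw [this]
  have swap : ∫ s in Ioc 0 t, ∫ r in Ioc 0 t, K (s, r) =
      ∫ r in Ioc 0 t, ∫ s in Ioc 0 t, K (s, r) := by
    exact MeasureTheory.integral_integral_swap hKint
  have lhs1 : ∫ s in Ioc 0 t, (∫ r in Ioc 0 s, h r) * u' s =
      ∫ s in Ioc 0 t, ∫ r in Ioc 0 t, K (s, r) := by
    apply setIntegral_congr_fun measurableSet_Ioc
    intro s hs
    dsimp only
    rw [step1 s hs, mul_comm]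
  have rhs1 : ∫ r in Ioc 0 t, ∫ s in Ioc 0 t, K (s, r) =
      (∫ r in Ioc 0 t, h r) * u t - ∫ r in Ioc 0 t, h r * u r := by
    rw [show (∫ r in Ioc 0 t, ∫ s in Ioc 0 t, K (s, r)) =
        ∫ r in Ioc 0 t, (u t * h r - u r * h r) by
      apply setIntegral_congr_fun measurableSet_Ioc
      intro r hr
      dsimp only
      rw [step2 r hr]; ring]
    rw [integral_sub ((hhIcc.mono_set Ioc_subset_Icc_self).const_mul (u t))
      (by simpa [mul_comm] using hhu.integrable)]
    rw [integral_const_mul]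
    congr 1
    · ring
    · apply setIntegral_congr_fun measurableSet_Ioc
      intro r _; ring
  rw [integral_add hhu hHu', lhs1, swap, rhs1]
  ring

set_option maxHeartbeats 1600000 in
/-- Let `λ > 0`, `ρ(x) = λ⁻¹ e^{-x/λ}`, `p ≥ 2` an integer with
conjugate exponent `p*`, `a > 1 + 1/p*`, and `ν_a(t) = -λ a ln(1-t)` on `[0,1)`.
For every `f ∈ F_{1,p}(ℝ₊)`, the function `g_{f,ν_a}(t) = f(ν_a(t)) ρ(ν_a(t)) ν_a'(t)`
satisfies `g(0) = 0`, belongs to `W_{1,p}` and its weak derivative satisfies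
`‖g'‖_{L_p(0,1)} ≤ a^{1+1/p*} λ^{1/p*} (1 + (a-1)((p-1)!)^{1/p}/(p(a-2)+1)) ‖f'‖_{L_p(0,∞)}`. -/
theorem exponential_density_W1p_bound
    (lam : ℝ) (hlam : 0 < lam)
    (ρ : ℝ → ℝ) (hρ : ∀ x, ρ x = lam⁻¹ * Real.exp (-x / lam))
    (p : ℕ) (hp : 2 ≤ p)
    (pstar : ℝ) (hpstar : 1 / (p : ℝ) + 1 / pstar = 1)
    (a : ℝ) (ha : 1 + 1 / pstar < a)
    (ν ν' : ℝ → ℝ)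
    (hν : ∀ t, ν t = -(lam * a) * Real.log (1 - t))
    (hν' : ∀ t, ν' t = lam * a / (1 - t))
    (f f' : ℝ → ℝ)
    (hf0 : f 0 = 0)
    (hf_int : ∀ x, 0 < x → IntervalIntegrable f' volume 0 x)
    (hf_repr : ∀ x, 0 ≤ x → f x = ∫ s in (0:ℝ)..x, f' s)
    (hf'Lp : MemLp f' (p : ℝ≥0∞) (volume.restrict (Ioi 0)))
    (g : ℝ → ℝ) (hg : ∀ t, g t = f (ν t) * ρ (ν t) * ν' t) :
    g 0 = 0 ∧
    ∃ g' : ℝ → ℝ,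
      (∀ t ∈ Ico (0:ℝ) 1, IntervalIntegrable g' volume 0 t ∧
        g t = ∫ s in (0:ℝ)..t, g' s) ∧
      eLpNorm g' (p : ℝ≥0∞) (volume.restrict (Ioo (0:ℝ) 1)) ≤
        ENNReal.ofReal
          (a ^ (1 + 1 / pstar) * lam ^ (1 / pstar) *
            (1 + (a - 1) * (Nat.factorial (p - 1) : ℝ) ^ (1 / (p : ℝ)) /
              ((p : ℝ) * (a - 2) + 1))) *
          eLpNorm f' (p : ℝ≥0∞) (volume.restrict (Ioi 0)) ∧
      eLpNorm g' (p : ℝ≥0∞) (volume.restrict (Ioo (0:ℝ) 1)) < ⊤ := by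
  -- basic numeric facts
  have hp2 : (2:ℝ) ≤ (p:ℝ) := by exact_mod_cast hp
  have hP0 : (0:ℝ) < (p:ℝ) := by linarith
  have hP1 : (1:ℝ) < (p:ℝ) := by linarith
  have h1p_lt : 1/(p:ℝ) < 1 := by rw [div_lt_one hP0]; linarith
  have h1p_le : 1/(p:ℝ) ≤ 1/2 := by
    rw [div_le_div_iff₀ hP0 (by norm_num)]; linarith
  have hps : 1/pstar = 1 - 1/(p:ℝ) := by linarith
  have hps_pos : 0 < 1/pstar := by rw [hps]; linarith
  have hpstar_pos : 0 < pstar := by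
    rcases lt_trichotomy pstar 0 with h|h|h
    · exfalso; have : 1/pstar < 0 := div_neg_of_pos_of_neg one_pos h; linarith
    · exfalso; rw [h] at hps_pos; simp at hps_pos
    · exact h
  have ha1 : 1 < a := by linarith
  have ha0 : 0 < a := by linarith
  have haa : 2 - 1/(p:ℝ) < a := by
    have : 1 + 1/pstar = 2 - 1/(p:ℝ) := by rw [hps]; ring
    linarith
  set c : ℝ := lam * a with hcdef
  have hc : 0 < c := mul_pos hlam ha0
  set κ : ℝ := (p:ℝ) * (a-2) + 1 with hκdef
  have hκ : 0 < κ := by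
    have h1 : (p:ℝ) * (-(1/(p:ℝ))) < (p:ℝ) * (a - 2) := by
      apply mul_lt_mul_of_pos_left _ hP0; linarith
    have h2 : (p:ℝ) * (-(1/(p:ℝ))) = -1 := by field_simp
    rw [hκdef]; linarith
  -- ν facts
  have hν0 : ν 0 = 0 := by rw [hν]; simp
  have hν_deriv : ∀ t : ℝ, t < 1 → HasDerivAt ν (c/(1-t)) t := by
    intro t htl
    have h1t : (0:ℝ) < 1 - t := by linarith
    have h1 : HasDerivAt (fun s : ℝ => 1 - s) (-1) t := by
      exact (hasDerivAt_id' t).const_sub 1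
    have h2 : HasDerivAt (fun s : ℝ => Real.log (1 - s)) ((1-t)⁻¹ * -1) t :=
      (Real.hasDerivAt_log h1t.ne').comp t h1
    have h3 := h2.const_mul (-c)
    have hν_eq : ν = fun s => -c * Real.log (1 - s) := funext fun s => hν s
    rw [hν_eq]
    refine h3.congr_deriv ?_
    ring
  have hν_mono : ∀ x y : ℝ, x < y → y < 1 → ν x < ν y := by
    intro x y hxy hy1
    have h1y : (0:ℝ) < 1 - y := by linarith
    have hlog := Real.log_lt_log h1y (show 1-y < 1-x by linarith)
    rw [hν x, hν y]
    nlinarith [hc]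
  have hν_nonneg : ∀ t : ℝ, 0 ≤ t → t < 1 → 0 ≤ ν t := by
    intro t ht0 ht1
    rcases eq_or_lt_of_le ht0 with h|h
    · rw [← h, hν0]
    · have := hν_mono 0 t h ht1; rw [hν0] at this; exact this.le
  set φ : ℝ → ℝ := fun x => 1 - Real.exp (-x/c) with hφdef
  have hφν : ∀ t : ℝ, t < 1 → φ (ν t) = t := by
    intro t ht1
    have h1t : (0:ℝ) < 1 - t := by linarith
    have : -(ν t)/c = Real.log (1-t) := by rw [hν t]; field_simp
    simp only [hφdef, this, Real.exp_log h1t]; ring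
  have hνφ : ∀ x : ℝ, ν (φ x) = x := by
    intro x
    have : (1 : ℝ) - φ x = Real.exp (-x/c) := by simp [hφdef]
    rw [hν, this, Real.log_exp]
    field_simp
  have hφ_pos : ∀ x : ℝ, 0 < x → 0 < φ x := by
    intro x hx
    have : Real.exp (-x/c) < 1 := by
      rw [Real.exp_lt_one_iff]
      exact div_neg_of_neg_of_pos (by linarith) hc
    simp only [hφdef]; linarith
  have hφ_lt_one : ∀ x : ℝ, φ x < 1 := by
    intro x; simp only [hφdef]
    have := Real.exp_pos (-x/c); linarith
  have hφ_mono : ∀ x y : ℝ, x ≤ y → φ x ≤ φ y := by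
    intro x y hxy
    simp only [hφdef]
    have : Real.exp (-y/c) ≤ Real.exp (-x/c) := by
      apply Real.exp_le_exp.mpr
      gcongr
    linarith
  have himg_ν : ∀ s : ℝ, 0 < s → s < 1 → ν '' (Ioc 0 s) = Ioc 0 (ν s) := by
    intro s hs0 hs1
    ext y
    simp only [mem_image, mem_Ioc]
    constructor
    · rintro ⟨x, ⟨hx0, hxs⟩, rfl⟩
      have hx1 : x < 1 := lt_of_le_of_lt hxs hs1
      refine ⟨?_, ?_⟩
      · have := hν_mono 0 x hx0 hx1; rwa [hν0] at this
      · rcases eq_or_lt_of_le hxs with h|h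
        · rw [h]
        · exact (hν_mono x s h hs1).le
    · rintro ⟨hy0, hys⟩
      refine ⟨φ y, ⟨hφ_pos y hy0, ?_⟩, hνφ y⟩
      have := hφ_mono y (ν s) hys
      rwa [hφν s hs1] at this
  have himg_φ : φ '' (Ioi 0) = Ioo 0 1 := by
    ext y
    simp only [mem_image, mem_Ioi, mem_Ioo]
    constructor
    · rintro ⟨x, hx, rfl⟩
      exact ⟨hφ_pos x hx, hφ_lt_one x⟩
    · rintro ⟨hy0, hy1⟩
      refine ⟨ν y, ?_, hφν y hy1⟩
      have := hν_mono 0 y hy0 hy1; rwa [hν0] at this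
  have hinj_φ : Set.InjOn φ (Ioi 0) := by
    intro x _ y _ hxy
    have := congrArg ν hxy
    rwa [hνφ, hνφ] at this
  have hinj_ν : ∀ s : ℝ, s < 1 → Set.InjOn ν (Ioc 0 s) := by
    intro s hs1 x hx y hy hxy
    have := congrArg φ hxy
    rwa [hφν x (lt_of_le_of_lt hx.2 hs1), hφν y (lt_of_le_of_lt hy.2 hs1)] at this
  -- measurable version of f'
  set f2 : ℝ → ℝ := (Ioi (0:ℝ)).indicator (hf'Lp.1.mk f') with hf2def
  have hf2sm : StronglyMeasurable f2 :=
    hf'Lp.1.stronglyMeasurable_mk.indicator measurableSet_Ioi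
  have hf2ae : f' =ᵐ[volume.restrict (Ioi 0)] f2 := by
    filter_upwards [hf'Lp.1.ae_eq_mk, ae_restrict_mem measurableSet_Ioi] with x h1 h2
    rw [hf2def, Set.indicator_of_mem h2]
    exact h1
  have hf2zero : ∀ x : ℝ, x ≤ 0 → f2 x = 0 := by
    intro x hx
    rw [hf2def, Set.indicator_of_notMem (by simpa using hx)]
  have hf2Lp : MemLp f2 (p : ℝ≥0∞) (volume.restrict (Ioi 0)) := hf'Lp.ae_eq hf2ae
  have hf2Ioc : ∀ x : ℝ, 0 < x → IntegrableOn f2 (Ioc 0 x) := by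
    intro x hx
    have h1 : IntegrableOn f' (Ioc 0 x) :=
      (intervalIntegrable_iff_integrableOn_Ioc_of_le hx.le).mp (hf_int x hx)
    apply h1.congr_fun_ae
    exact ae_restrict_of_ae_restrict_of_subset Ioc_subset_Ioi_self hf2ae
  have hf2ii : ∀ b : ℝ, IntervalIntegrable f2 volume 0 b := by
    intro b
    rcases le_or_gt b 0 with hb|hb
    · apply IntervalIntegrable.symm
      rw [intervalIntegrable_iff]
      apply (integrableOn_zero).congr_fun_ae
      have : ∀ᵐ x ∂(volume.restrict (Set.uIoc b 0)), x ∈ Set.uIoc b 0 :=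
        ae_restrict_mem measurableSet_uIoc
      filter_upwards [this] with x hx
      rw [hf2zero x]
      rw [Set.uIoc_of_le hb] at hx
      exact hx.2
    · rw [intervalIntegrable_iff_integrableOn_Ioc_of_le hb.le]
      exact hf2Ioc b hb
  have hf2ii' : ∀ x y : ℝ, IntervalIntegrable f2 volume x y :=
    fun x y => (hf2ii x).symm.trans (hf2ii y)
  set F : ℝ → ℝ := fun x => ∫ s in (0:ℝ)..x, f2 s with hFdef
  have hF_cont : Continuous F := intervalIntegral.continuous_primitive hf2ii' 0
  have hfF : ∀ x : ℝ, 0 ≤ x → f x = F x := by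
    intro x hx
    rw [hf_repr x hx, hFdef]
    rcases eq_or_lt_of_le hx with h|h
    · rw [← h]; simp
    · dsimp only
      rw [intervalIntegral.integral_of_le hx, intervalIntegral.integral_of_le hx]
      apply integral_congr_ae
      exact ae_restrict_of_ae_restrict_of_subset Ioc_subset_Ioi_self hf2ae
  -- the weak derivative
  set u : ℝ → ℝ := fun s => a * (1-s) ^ (a-1) with hudef
  set u' : ℝ → ℝ := fun s => -(a*(a-1)) * (1-s) ^ (a-2) with hu'def
  set h : ℝ → ℝ := fun s => f2 (ν s) * (c/(1-s)) with hhdef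
  set g' : ℝ → ℝ := fun s => h s * u s + F (ν s) * u' s with hg'def
  have hu_deriv : ∀ s : ℝ, s < 1 → HasDerivAt u (u' s) s := by
    intro s hs
    have h1s : (0:ℝ) < 1 - s := by linarith
    have h1 : HasDerivAt (fun x : ℝ => 1 - x) (-1) s := by
      exact (hasDerivAt_id' s).const_sub 1
    have h2 : HasDerivAt (fun x : ℝ => (1 - x) ^ (a-1))
        ((a-1) * (1-s)^(a-1-1) * (-1)) s :=
      (Real.hasDerivAt_rpow_const (Or.inl h1s.ne')).comp s h1
    have h3 := h2.const_mul a
    rw [hudef, hu'def]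
    refine h3.congr_deriv ?_
    rw [show a - 1 - 1 = a - 2 by ring]; ring
  have hu'_cont : ∀ T : ℝ, T < 1 → ContinuousOn u' (Icc 0 T) := by
    intro T hT
    rw [hu'def]
    apply continuousOn_const.mul
    apply ContinuousOn.rpow_const
    · exact continuousOn_const.sub continuousOn_id
    · intro s hs
      exact Or.inl (by simp; linarith [hs.2])
  have hν_derivWithin : ∀ (S : Set ℝ), (∀ x ∈ S, x < 1) →
      ∀ x ∈ S, HasDerivWithinAt ν (c/(1-x)) S x :=
    fun S hS x hx => (hν_deriv x (hS x hx)).hasDerivWithinAt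
  -- CoV results
  have hh_int : ∀ t : ℝ, 0 < t → t < 1 → IntegrableOn h (Ioc 0 t) := by
    intro t ht0 ht1
    have himg := himg_ν t ht0 ht1
    have hlt : ∀ x ∈ Ioc (0:ℝ) t, x < 1 := fun x hx => lt_of_le_of_lt hx.2 ht1
    have hbase : IntegrableOn f2 (ν '' Ioc 0 t) := by
      rw [himg]; exact hf2Ioc (ν t) (by
        have := hν_mono 0 t ht0 ht1; rwa [hν0] at this)
    have := (integrableOn_image_iff_integrableOn_abs_deriv_smul measurableSet_Ioc
      (hν_derivWithin _ hlt) (hinj_ν t ht1) f2).mp hbase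
    apply this.congr_fun ?_ measurableSet_Ioc
    intro x hx
    have h1x : (0:ℝ) < 1 - x := by linarith [hlt x hx]
    rw [hhdef]
    simp only [smul_eq_mul]
    rw [abs_of_pos (div_pos hc h1x), mul_comm]
  have hF_eq : ∀ s : ℝ, 0 < s → s < 1 → F (ν s) = ∫ r in Ioc 0 s, h r := by
    intro s hs0 hs1
    have hνs : 0 < ν s := by have := hν_mono 0 s hs0 hs1; rwa [hν0] at this
    have hlt : ∀ x ∈ Ioc (0:ℝ) s, x < 1 := fun x hx => lt_of_le_of_lt hx.2 hs1
    have : F (ν s) = ∫ x in Ioc 0 (ν s), f2 x := by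
      rw [hFdef]; exact intervalIntegral.integral_of_le hνs.le
    rw [this, ← himg_ν s hs0 hs1,
      integral_image_eq_integral_abs_deriv_smul measurableSet_Ioc
        (hν_derivWithin _ hlt) (hinj_ν s hs1) f2]
    apply setIntegral_congr_fun measurableSet_Ioc
    intro x hx
    have h1x : (0:ℝ) < 1 - x := by linarith [hlt x hx]
    rw [hhdef]
    simp only [smul_eq_mul]
    rw [abs_of_pos (div_pos hc h1x), mul_comm]
  have ha1' : (0:ℝ) < a - 1 := by linarith
  have haA : (0:ℝ) < a*(a-1) := mul_pos ha0 ha1'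
  have hacp : (0:ℝ) < a*c := mul_pos ha0 hc
  have hpne : (p : ℝ≥0∞) ≠ 0 := by
    simp only [ne_eq, Nat.cast_eq_zero]; omega
  have hptop : (p : ℝ≥0∞) ≠ ⊤ := ENNReal.natCast_ne_top p
  have htoReal : ((p : ℝ≥0∞)).toReal = (p:ℝ) := by simp
  have hcovL : ∀ G : ℝ → ℝ≥0∞,
      ∫⁻ x in Ioo (0:ℝ) 1, G x
        = ∫⁻ x in Ioi (0:ℝ), ENNReal.ofReal (Real.exp (-x/c)/c) * G (φ x) := by
    intro G
    have hd : ∀ x ∈ Ioi (0:ℝ), HasDerivWithinAt φ (Real.exp (-x/c)/c) (Ioi 0) x := by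
      intro x _
      apply HasDerivAt.hasDerivWithinAt
      have h1 : HasDerivAt (fun y : ℝ => -y/c) (-1/c) x := by
        simpa using ((hasDerivAt_id x).neg.div_const c)
      have h2 := (Real.hasDerivAt_exp (-x/c)).comp x h1
      have h3 := h2.const_sub 1
      rw [hφdef]
      refine h3.congr_deriv ?_
      ring
    have hcv := my_lintegral_cov measurableSet_Ioi hd hinj_φ G
    rw [himg_φ] at hcv
    rw [hcv]
    apply setLIntegral_congr_fun measurableSet_Ioi
    intro x _
    dsimp only
    rw [abs_of_pos (div_pos (Real.exp_pos _) hc)]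
  have hfpint : Integrable (fun x => |f2 x| ^ (p:ℝ)) (volume.restrict (Ioi 0)) := by
    have h1 := hf2Lp.integrable_norm_rpow hpne hptop
    simpa [htoReal, Real.norm_eq_abs] using h1
  set Kf : ℝ := (∫ x in Ioi (0:ℝ), |f2 x| ^ (p:ℝ)) ^ (1/(p:ℝ)) with hKfdef
  have hIint_nonneg : 0 ≤ ∫ x in Ioi (0:ℝ), |f2 x| ^ (p:ℝ) :=
    integral_nonneg fun x => by positivity
  have hKf0 : 0 ≤ Kf := Real.rpow_nonneg hIint_nonneg _
  have hIeq : ∫⁻ x in Ioi (0:ℝ), ‖f2 x‖ₑ ^ (p:ℝ)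
      = ENNReal.ofReal (∫ x in Ioi (0:ℝ), |f2 x| ^ (p:ℝ)) := by
    rw [ofReal_integral_eq_lintegral_ofReal hfpint (ae_of_all _ fun x => by positivity)]
    apply lintegral_congr
    intro x
    rw [← ENNReal.ofReal_rpow_of_nonneg (abs_nonneg _) hP0.le, ← Real.enorm_eq_ofReal_abs]
  have hN2 : eLpNorm f2 (p:ℝ≥0∞) (volume.restrict (Ioi 0)) = ENNReal.ofReal Kf := by
    rw [eLpNorm_eq_lintegral_rpow_enorm_toReal hpne hptop, htoReal, hIeq,
      ← ENNReal.ofReal_rpow_of_nonneg hIint_nonneg (by positivity)]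
  have hNf'2 : eLpNorm f' (p:ℝ≥0∞) (volume.restrict (Ioi 0)) = ENNReal.ofReal Kf := by
    rw [← hN2]; exact eLpNorm_congr_ae hf2ae
  -- Hölder bound for F
  have hpq : Real.HolderConjugate (p:ℝ) pstar :=
    Real.holderConjugate_iff.mpr ⟨hP1, by rw [← one_div, ← one_div]; exact hpstar⟩
  have hHolder : ∀ x : ℝ, 0 < x → |F x| ≤ Kf * x ^ (1/pstar) := by
    intro x hx
    haveI : IsFiniteMeasure (volume.restrict (Ioc (0:ℝ) x)) :=
      ⟨by rw [Measure.restrict_apply_univ]; exact measure_Ioc_lt_top⟩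
    have hres : volume.restrict (Ioc (0:ℝ) x) ≤ volume.restrict (Ioi (0:ℝ)) :=
      Measure.restrict_mono Ioc_subset_Ioi_self le_rfl
    have hmemf : MemLp (fun r => |f2 r|) (ENNReal.ofReal (p:ℝ))
        (volume.restrict (Ioc 0 x)) := by
      rw [ENNReal.ofReal_natCast]
      exact (hf2Lp.mono_measure hres).abs
    have hmem1 : MemLp (fun _ : ℝ => (1:ℝ)) (ENNReal.ofReal pstar)
        (volume.restrict (Ioc 0 x)) := memLp_const 1
    have hhold := integral_mul_le_Lp_mul_Lq_of_nonneg hpq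
      (ae_of_all _ fun r => abs_nonneg (f2 r)) (ae_of_all _ fun _ : ℝ => zero_le_one)
      hmemf hmem1
    simp only [mul_one, Real.one_rpow] at hhold
    have h1 : ∫ _r in Ioc (0:ℝ) x, (1:ℝ) = x := by
      simp [Real.volume_Ioc, ENNReal.toReal_ofReal hx.le, hx.le]
    rw [h1] at hhold
    have h2 : (∫ r in Ioc (0:ℝ) x, |f2 r| ^ (p:ℝ)) ^ (1/(p:ℝ)) ≤ Kf := by
      apply Real.rpow_le_rpow (integral_nonneg fun r => by positivity) ?_ (by positivity)
      apply setIntegral_mono_set hfpint (ae_of_all _ fun r => by positivity)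
      exact HasSubset.Subset.eventuallyLE Ioc_subset_Ioi_self
    have habs : |F x| ≤ ∫ r in Ioc (0:ℝ) x, |f2 r| := by
      rw [hFdef]
      dsimp only
      rw [intervalIntegral.integral_of_le hx.le]
      calc |∫ r in Ioc (0:ℝ) x, f2 r| ≤ ∫ r in Ioc (0:ℝ) x, ‖f2 r‖ :=
            norm_integral_le_integral_norm f2
        _ = _ := by simp [Real.norm_eq_abs]
    calc |F x| ≤ ∫ r in Ioc (0:ℝ) x, |f2 r| := habs
      _ ≤ (∫ r in Ioc (0:ℝ) x, |f2 r| ^ (p:ℝ)) ^ (1/(p:ℝ)) * x ^ (1/pstar) := hhold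
      _ ≤ Kf * x ^ (1/pstar) := mul_le_mul_of_nonneg_right h2 (Real.rpow_nonneg hx.le _)
  -- Gamma integral
  have hGammaInt : Integrable (fun x => x ^ ((p:ℝ)-1) * Real.exp (-(κ/c * x)))
      (volume.restrict (Ioi 0)) := by
    have h1 := integrableOn_rpow_mul_exp_neg_mul_rpow
      (show (-1:ℝ) < (p:ℝ)-1 by linarith) one_pos (div_pos hκ hc)
    apply h1.congr_fun ?_ measurableSet_Ioi
    intro x _
    dsimp only
    rw [Real.rpow_one, neg_mul]
  set fac : ℝ := (Nat.factorial (p - 1) : ℝ) with hfacdef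
  have hfac0 : (0:ℝ) < fac := by
    rw [hfacdef]; exact_mod_cast Nat.factorial_pos _
  have hGammaVal : ∫ x in Ioi (0:ℝ), x ^ ((p:ℝ)-1) * Real.exp (-(κ/c * x))
      = (c/κ)^(p:ℝ) * fac := by
    have h1 := Real.integral_rpow_mul_exp_neg_mul_Ioi hP0 (div_pos hκ hc)
    rw [h1, one_div_div]
    congr 1
    have h2 : ((p-1:ℕ):ℝ) = (p:ℝ) - 1 := by
      rw [Nat.cast_sub (by omega : 1 ≤ p)]; simp
    have hcast : ((p:ℝ)) = ((p-1 : ℕ) : ℝ) + 1 := by rw [h2]; ring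
    rw [hcast, Real.Gamma_nat_eq_factorial, hfacdef]
  have hQ : ∫⁻ x in Ioi (0:ℝ), ENNReal.ofReal (x ^ ((p:ℝ)-1) * Real.exp (-(κ/c * x)))
      = ENNReal.ofReal ((c/κ)^(p:ℝ) * fac) := by
    rw [← hGammaVal, ← ofReal_integral_eq_lintegral_ofReal hGammaInt ?_]
    filter_upwards [ae_restrict_mem measurableSet_Ioi] with x hx
    exact mul_nonneg (Real.rpow_nonneg (le_of_lt hx) _) (Real.exp_pos _).le
  -- pointwise bound for the first part
  have hAptwise : ∀ x : ℝ, 0 < x →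
      ENNReal.ofReal (Real.exp (-x/c)/c) * ‖h (φ x) * u (φ x)‖ₑ ^ (p:ℝ)
        ≤ ENNReal.ofReal ((a*c)^(p:ℝ)/c) * ‖f2 x‖ₑ ^ (p:ℝ) := by
    intro x hx
    set E := Real.exp (-x/c) with hEdef
    have hE0 : (0:ℝ) < E := Real.exp_pos _
    have h1φ : 1 - φ x = E := by simp [hφdef, hEdef]
    have hval : h (φ x) * u (φ x) = f2 x * ((a*c) * E ^ (a-2)) := by
      rw [hhdef, hudef]
      dsimp only
      rw [hνφ x, h1φ]
      have hE1 : E ^ (a-(1:ℝ)) = E ^ (a-2) * E := by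
        have hadd := Real.rpow_add hE0 (a-2) 1
        rw [Real.rpow_one] at hadd
        rw [show a - (1:ℝ) = a - 2 + 1 by ring, hadd]
      rw [hE1]
      field_simp
    rw [hval, Real.enorm_eq_ofReal_abs, Real.enorm_eq_ofReal_abs,
        ENNReal.ofReal_rpow_of_nonneg (abs_nonneg _) hP0.le,
        ENNReal.ofReal_rpow_of_nonneg (abs_nonneg _) hP0.le,
        ← ENNReal.ofReal_mul (div_nonneg (Real.exp_pos _).le hc.le),
        ← ENNReal.ofReal_mul (div_nonneg (Real.rpow_nonneg hacp.le _) hc.le)]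
    apply ENNReal.ofReal_le_ofReal
    have hM : (0:ℝ) < (a*c) * E^(a-2) := mul_pos hacp (Real.rpow_pos_of_pos hE0 _)
    have hfa : |f2 x * ((a*c) * E^(a-2))| = |f2 x| * ((a*c) * E^(a-2)) := by
      rw [abs_mul, abs_of_pos hM]
    rw [hfa, Real.mul_rpow (abs_nonneg _) hM.le]
    have hsplit2 : ((a*c) * E^(a-2)) ^ (p:ℝ) = (a*c)^(p:ℝ) * E ^ ((a-2)*(p:ℝ)) := by
      rw [Real.mul_rpow hacp.le (Real.rpow_pos_of_pos hE0 _).le, ← Real.rpow_mul hE0.le]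
    rw [hsplit2]
    have hEκ : E ^ ((a-2)*(p:ℝ)) * E ≤ 1 := by
      have he1 : E ^ ((a-2)*(p:ℝ)) * E = Real.exp (-x/c * κ) := by
        rw [hEdef, ← Real.exp_mul, ← Real.exp_add]
        congr 1
        rw [hκdef]
        ring
      rw [he1, Real.exp_le_one_iff]
      have hxc : 0 < x/c := div_pos hx hc
      have heq2 : -x/c*κ = -(x/c*κ) := by ring
      rw [heq2]
      have := mul_pos hxc hκ
      linarith
    calc E/c * (|f2 x|^(p:ℝ) * ((a*c)^(p:ℝ) * E^((a-2)*(p:ℝ))))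
        = (a*c)^(p:ℝ)/c * |f2 x|^(p:ℝ) * (E^((a-2)*(p:ℝ)) * E) := by
          ring
      _ ≤ (a*c)^(p:ℝ)/c * |f2 x|^(p:ℝ) * 1 :=
          mul_le_mul_of_nonneg_left hEκ
            (mul_nonneg (div_nonneg (Real.rpow_nonneg hacp.le _) hc.le)
              (Real.rpow_nonneg (abs_nonneg _) _))
      _ = (a*c)^(p:ℝ)/c * |f2 x|^(p:ℝ) := by ring
  have hAlint : ∫⁻ x in Ioo (0:ℝ) 1, ‖h x * u x‖ₑ ^ (p:ℝ)
      ≤ ENNReal.ofReal ((a*c)^(p:ℝ)/c)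
        * ∫⁻ x in Ioi (0:ℝ), ‖f2 x‖ₑ^(p:ℝ) := by
    rw [hcovL (fun x => ‖h x * u x‖ₑ^(p:ℝ)),
      ← lintegral_const_mul' _ _ ENNReal.ofReal_ne_top]
    refine lintegral_mono_ae ?_
    filter_upwards [ae_restrict_mem measurableSet_Ioi] with x hx
    exact hAptwise x hx
  have hA_bound : eLpNorm (fun s => h s * u s) (p:ℝ≥0∞) (volume.restrict (Ioo 0 1))
      ≤ ENNReal.ofReal (((a*c)^(p:ℝ)/c) ^ (1/(p:ℝ))) * ENNReal.ofReal Kf := by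
    rw [eLpNorm_eq_lintegral_rpow_enorm_toReal hpne hptop, htoReal]
    refine le_trans (ENNReal.rpow_le_rpow hAlint (by positivity)) ?_
    rw [ENNReal.mul_rpow_of_nonneg _ _ (by positivity), hIeq,
      ENNReal.ofReal_rpow_of_nonneg (div_nonneg (Real.rpow_nonneg hacp.le _) hc.le)
        (by positivity),
      ENNReal.ofReal_rpow_of_nonneg hIint_nonneg (by positivity), ← hKfdef]
  -- pointwise bound for the second part
  have hexpo : (1/pstar)*(p:ℝ) = (p:ℝ)-1 := by
    rw [hps]
    field_simp
  have hBptwise : ∀ x : ℝ, 0 < x →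
      ENNReal.ofReal (Real.exp (-x/c)/c) * ‖F (ν (φ x)) * u' (φ x)‖ₑ ^ (p:ℝ)
        ≤ ENNReal.ofReal ((a*(a-1))^(p:ℝ) * Kf^(p:ℝ) / c)
          * ENNReal.ofReal (x ^ ((p:ℝ)-1) * Real.exp (-(κ/c * x))) := by
    intro x hx
    set E := Real.exp (-x/c) with hEdef
    have hE0 : (0:ℝ) < E := Real.exp_pos _
    have h1φ : 1 - φ x = E := by simp [hφdef, hEdef]
    have hu'val : u' (φ x) = -(a*(a-1)) * E ^ (a-2) := by
      rw [hu'def]; dsimp only; rw [h1φ]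
    have hM : (0:ℝ) < (a*(a-1)) * E^(a-2) := mul_pos haA (Real.rpow_pos_of_pos hE0 _)
    rw [hνφ x, hu'val, Real.enorm_eq_ofReal_abs,
        ENNReal.ofReal_rpow_of_nonneg (abs_nonneg _) hP0.le,
        ← ENNReal.ofReal_mul (div_nonneg (Real.exp_pos _).le hc.le),
        ← ENNReal.ofReal_mul
          (div_nonneg (mul_nonneg (Real.rpow_nonneg haA.le _)
            (Real.rpow_nonneg hKf0 _)) hc.le)]
    apply ENNReal.ofReal_le_ofReal
    have habs2 : |F x * (-(a*(a-1)) * E^(a-2))| = |F x| * ((a*(a-1)) * E^(a-2)) := by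
      rw [abs_mul, show -(a*(a-1)) * E^(a-2) = -((a*(a-1)) * E^(a-2)) by ring,
        abs_neg, abs_of_pos hM]
    calc E/c * |F x * (-(a*(a-1)) * E^(a-2))|^(p:ℝ)
        = E/c * (|F x| * ((a*(a-1)) * E^(a-2)))^(p:ℝ) := by rw [habs2]
      _ ≤ E/c * ((Kf * x^(1/pstar)) * ((a*(a-1)) * E^(a-2)))^(p:ℝ) := by
          apply mul_le_mul_of_nonneg_left ?_ (div_nonneg hE0.le hc.le)
          apply Real.rpow_le_rpow (mul_nonneg (abs_nonneg _) hM.le) ?_ hP0.le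
          exact mul_le_mul_of_nonneg_right (hHolder x hx) hM.le
      _ = (a*(a-1))^(p:ℝ) * Kf^(p:ℝ)/c * (x^((p:ℝ)-1) * Real.exp (-(κ/c * x))) := by
          rw [Real.mul_rpow (mul_nonneg hKf0 (Real.rpow_nonneg hx.le _)) hM.le,
            Real.mul_rpow hKf0 (Real.rpow_nonneg hx.le _),
            Real.mul_rpow haA.le (Real.rpow_pos_of_pos hE0 _).le,
            ← Real.rpow_mul hx.le, hexpo, ← Real.rpow_mul hE0.le]
          have hEr : E ^ ((a-2)*(p:ℝ)) * E = Real.exp (-(κ/c*x)) := by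
            rw [hEdef, ← Real.exp_mul, ← Real.exp_add]
            congr 1
            rw [hκdef]
            field_simp
            ring
          rw [← hEr]
          ring
  have hBlint : ∫⁻ x in Ioo (0:ℝ) 1, ‖F (ν x) * u' x‖ₑ ^ (p:ℝ)
      ≤ ENNReal.ofReal ((a*(a-1))^(p:ℝ) * Kf^(p:ℝ) / c)
        * ENNReal.ofReal ((c/κ)^(p:ℝ) * fac) := by
    rw [hcovL (fun x => ‖F (ν x) * u' x‖ₑ^(p:ℝ)), ← hQ,
      ← lintegral_const_mul' _ _ ENNReal.ofReal_ne_top]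
    refine lintegral_mono_ae ?_
    filter_upwards [ae_restrict_mem measurableSet_Ioi] with x hx
    exact hBptwise x hx
  have hB_bound : eLpNorm (fun s => F (ν s) * u' s) (p:ℝ≥0∞) (volume.restrict (Ioo 0 1))
      ≤ ENNReal.ofReal (((a*(a-1))^(p:ℝ) / c * ((c/κ)^(p:ℝ) * fac)) ^ (1/(p:ℝ)))
        * ENNReal.ofReal Kf := by
    rw [eLpNorm_eq_lintegral_rpow_enorm_toReal hpne hptop, htoReal]
    refine le_trans (ENNReal.rpow_le_rpow hBlint (by positivity)) ?_
    rw [← ENNReal.ofReal_mul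
        (div_nonneg (mul_nonneg (Real.rpow_nonneg haA.le _)
          (Real.rpow_nonneg hKf0 _)) hc.le),
      ENNReal.ofReal_rpow_of_nonneg
        (mul_nonneg (div_nonneg (mul_nonneg (Real.rpow_nonneg haA.le _)
          (Real.rpow_nonneg hKf0 _)) hc.le)
          (mul_nonneg (Real.rpow_nonneg (div_nonneg hc.le hκ.le) _) hfac0.le))
        (by positivity),
      ← ENNReal.ofReal_mul
        (Real.rpow_nonneg (mul_nonneg (div_nonneg (Real.rpow_nonneg haA.le _) hc.le)
          (mul_nonneg (Real.rpow_nonneg (div_nonneg hc.le hκ.le) _) hfac0.le)) _)]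
    apply ENNReal.ofReal_le_ofReal
    have hre : (a*(a-1))^(p:ℝ) * Kf^(p:ℝ)/c * ((c/κ)^(p:ℝ) * fac)
        = ((a*(a-1))^(p:ℝ)/c * ((c/κ)^(p:ℝ) * fac)) * Kf^(p:ℝ) := by ring
    rw [hre, Real.mul_rpow
        (mul_nonneg (div_nonneg (Real.rpow_nonneg haA.le _) hc.le)
          (mul_nonneg (Real.rpow_nonneg (div_nonneg hc.le hκ.le) _) hfac0.le))
        (Real.rpow_nonneg hKf0 _),
      ← Real.rpow_mul hKf0, mul_one_div_cancel hP0.ne', Real.rpow_one]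
  -- measurability
  have hν_eq2 : ν = fun s => -c * Real.log (1-s) := funext fun s => hν s
  have hν_meas : Measurable ν := by
    rw [hν_eq2]
    exact (Real.measurable_log.comp (measurable_const.sub measurable_id)).const_mul (-c)
  have hu_contOn : ContinuousOn u (Ioo (0:ℝ) 1) := by
    rw [hudef]
    apply continuousOn_const.mul
    apply ContinuousOn.rpow_const (continuousOn_const.sub continuousOn_id)
    intro s hs
    exact Or.inl (ne_of_gt (by simp only [mem_Ioo] at hs; linarith [hs.2] : (0:ℝ) < 1 - s))
  have hu'_contOn : ContinuousOn u' (Ioo (0:ℝ) 1) := by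
    rw [hu'def]
    apply continuousOn_const.mul
    apply ContinuousOn.rpow_const (continuousOn_const.sub continuousOn_id)
    intro s hs
    exact Or.inl (ne_of_gt (by simp only [mem_Ioo] at hs; linarith [hs.2] : (0:ℝ) < 1 - s))
  have hA_meas : AEStronglyMeasurable (fun s => h s * u s)
      (volume.restrict (Ioo (0:ℝ) 1)) := by
    apply AEStronglyMeasurable.mul
    · rw [hhdef]
      apply Measurable.aestronglyMeasurable
      exact (hf2sm.measurable.comp hν_meas).mul
        (measurable_const.div (measurable_const.sub measurable_id))
    · exact hu_contOn.aestronglyMeasurable measurableSet_Ioo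
  have hB_meas : AEStronglyMeasurable (fun s => F (ν s) * u' s)
      (volume.restrict (Ioo (0:ℝ) 1)) := by
    apply AEStronglyMeasurable.mul
    · exact (hF_cont.measurable.comp hν_meas).aestronglyMeasurable
    · exact hu'_contOn.aestronglyMeasurable measurableSet_Ioo
  have hone : (1:ℝ≥0∞) ≤ (p:ℝ≥0∞) := by exact_mod_cast (show 1 ≤ p by omega)
  have htri : eLpNorm g' (p:ℝ≥0∞) (volume.restrict (Ioo (0:ℝ) 1))
      ≤ eLpNorm (fun s => h s * u s) (p:ℝ≥0∞) (volume.restrict (Ioo (0:ℝ) 1))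
        + eLpNorm (fun s => F (ν s) * u' s) (p:ℝ≥0∞) (volume.restrict (Ioo (0:ℝ) 1)) := by
    have hgg : g' = (fun s => h s * u s) + (fun s => F (ν s) * u' s) := rfl
    rw [hgg]
    exact eLpNorm_add_le hA_meas hB_meas hone
  -- the constant identity
  have hc1 : c^(1/pstar) = c/c^(1/(p:ℝ)) := by
    rw [hps, Real.rpow_sub hc, Real.rpow_one]
  have hcP : (0:ℝ) < c^(1/(p:ℝ)) := Real.rpow_pos_of_pos hc _
  have hD1 : ((a*c)^(p:ℝ)/c) ^ (1/(p:ℝ)) = a * c^(1/pstar) := by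
    rw [Real.div_rpow (Real.rpow_nonneg hacp.le _) hc.le,
       ← Real.rpow_mul hacp.le, mul_one_div_cancel hP0.ne', Real.rpow_one, hc1,
       mul_div_assoc]
  have hD2 : ((a*(a-1))^(p:ℝ)/c * ((c/κ)^(p:ℝ) * fac)) ^ (1/(p:ℝ))
      = a*(a-1) * c^(1/pstar) * fac^(1/(p:ℝ)) / κ := by
    have hinner : (a*(a-1))^(p:ℝ)/c * ((c/κ)^(p:ℝ) * fac)
        = ((a*(a-1)) * (c/κ))^(p:ℝ) * (fac / c) := by
      rw [Real.mul_rpow haA.le (div_nonneg hc.le hκ.le)]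
      ring
    rw [hinner, Real.mul_rpow
         (Real.rpow_nonneg (mul_nonneg haA.le (div_nonneg hc.le hκ.le)) _)
         (div_nonneg hfac0.le hc.le),
      ← Real.rpow_mul (mul_nonneg haA.le (div_nonneg hc.le hκ.le)),
      mul_one_div_cancel hP0.ne', Real.rpow_one,
      Real.div_rpow hfac0.le hc.le, hc1]
    field_simp
  have htarget : ((a*c)^(p:ℝ)/c) ^ (1/(p:ℝ))
      + ((a*(a-1))^(p:ℝ)/c * ((c/κ)^(p:ℝ) * fac)) ^ (1/(p:ℝ))
      = a^(1+1/pstar) * lam^(1/pstar) * (1 + (a-1)*fac^(1/(p:ℝ))/κ) := by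
    rw [hD1, hD2]
    have hac2 : c^(1/pstar) = lam^(1/pstar) * a^(1/pstar) := by
      rw [hcdef, Real.mul_rpow hlam.le ha0.le]
    have haa2 : a^(1+1/pstar) = a * a^(1/pstar) := by
      rw [Real.rpow_add ha0, Real.rpow_one]
    rw [hac2, haa2]
    field_simp
  have hD1nn : (0:ℝ) ≤ ((a*c)^(p:ℝ)/c) ^ (1/(p:ℝ)) :=
    Real.rpow_nonneg (div_nonneg (Real.rpow_nonneg hacp.le _) hc.le) _
  have hD2nn : (0:ℝ) ≤ ((a*(a-1))^(p:ℝ)/c * ((c/κ)^(p:ℝ) * fac)) ^ (1/(p:ℝ)) :=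
    Real.rpow_nonneg (mul_nonneg (div_nonneg (Real.rpow_nonneg haA.le _) hc.le)
      (mul_nonneg (Real.rpow_nonneg (div_nonneg hc.le hκ.le) _) hfac0.le)) _
  have hfinal : eLpNorm g' (p:ℝ≥0∞) (volume.restrict (Ioo (0:ℝ) 1))
      ≤ ENNReal.ofReal (a^(1+1/pstar) * lam^(1/pstar) * (1 + (a-1)*fac^(1/(p:ℝ))/κ))
        * ENNReal.ofReal Kf := by
    refine le_trans htri (le_trans (add_le_add hA_bound hB_bound) ?_)
    rw [← add_mul, ← ENNReal.ofReal_add hD1nn hD2nn, htarget]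
  -- g 0 = 0
  have hg0 : g 0 = 0 := by rw [hg, hν0, hf0]; ring
  refine ⟨hg0, g', ?_, ?_, ?_⟩
  · -- representation
    rintro t ⟨ht0, ht1⟩
    rcases eq_or_lt_of_le ht0 with h0|ht0'
    · rw [← h0]
      exact ⟨IntervalIntegrable.refl, by rw [intervalIntegral.integral_same, hg0]⟩
    have h1t : (0:ℝ) < 1 - t := by linarith
    have hu_on : ∀ s ∈ Icc (0:ℝ) t, HasDerivAt u (u' s) s :=
      fun s hs => hu_deriv s (lt_of_le_of_lt hs.2 ht1)
    have hu_cont : ContinuousOn u (Icc 0 t) :=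
      fun s hs => (hu_on s hs).continuousAt.continuousWithinAt
    have hhint := hh_int t ht0' ht1
    have hν_contOn : ContinuousOn ν (Icc 0 t) := fun s hs =>
      (hν_deriv s (lt_of_le_of_lt hs.2 ht1)).continuousAt.continuousWithinAt
    have hint1 : IntegrableOn (fun s => h s * u s) (Ioc 0 t) :=
      (((integrableOn_Icc_iff_integrableOn_Ioc).mpr hhint).mul_continuousOn
        hu_cont isCompact_Icc).mono_set Ioc_subset_Icc_self
    have hint2 : IntegrableOn (fun s => F (ν s) * u' s) (Ioc 0 t) := by
      apply ContinuousOn.integrableOn_Icc ?_ |>.mono_set Ioc_subset_Icc_self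
      exact (hF_cont.comp_continuousOn hν_contOn).mul (hu'_cont t ht1)
    have hg'int : IntegrableOn g' (Ioc 0 t) := by
      rw [hg'def]; exact hint1.add hint2
    constructor
    · rw [intervalIntegrable_iff_integrableOn_Ioc_of_le ht0]
      exact hg'int
    · rw [intervalIntegral.integral_of_le ht0]
      have hcongr : ∫ s in Ioc 0 t, g' s =
          ∫ s in Ioc 0 t, (h s * u s + (∫ r in Ioc 0 s, h r) * u' s) := by
        apply setIntegral_congr_fun measurableSet_Ioc
        intro s hs
        rw [hg'def]
        dsimp only
        rw [hF_eq s hs.1 (lt_of_le_of_lt hs.2 ht1)]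
      rw [hcongr, my_parts ht0' hhint hu_on (hu'_cont t ht1),
        ← hF_eq t ht0' ht1]
      -- g t = F (ν t) * u t
      rw [hg t, hρ (ν t), hν' t, hfF (ν t) (hν_nonneg t ht0 ht1)]
      have hexp : Real.exp (-(ν t)/lam) = (1-t)^a := by
        rw [hν t, Real.rpow_def_of_pos h1t]
        congr 1
        field_simp
        ring
      rw [hexp, hudef]
      have hsplit : (1-t)^a = (1-t)^(a-1) * (1-t) := by
        have h' := Real.rpow_add h1t (a-1) 1
        rw [Real.rpow_one, show a - 1 + 1 = a from by ring] at h'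
        exact h'
      rw [hsplit]
      field_simp
      ring
  · rw [hNf'2]
    exact hfinal
  · refine lt_of_le_of_lt hfinal ?_
    exact ENNReal.mul_lt_top ENNReal.ofReal_lt_top ENNReal.ofReal_lt_top
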